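/- Let f = Xⁿ + a_{n−1}X^{n−1} + ⋯ + a₁X + a₀ ∈ ℍ[X] be monic with n ≥ 1. Then every r ∈ sn(f) satisfies all of: ‖r‖ < √(1 + ‖a_{n−1}‖² + ⋯ + ‖a₀‖²); ‖r‖ < 1 + max_{0 ≤ k ≤ n−1} ‖aₖ‖; and ‖r‖ ≤ max{1, ‖a_{n−1}‖ + ⋯ + ‖a₀‖}. -/

import Mathlib

open Polynomial

noncomputable section

/-- The real subalgebra `ℂ_I = ℝ·1 + ℝ·I` of `ℍ`, as an `ℝ`-submodule. -/
def CI (I : Quaternion ℝ) : Submodule ℝ (Quaternion ℝ) :=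
  Submodule.span ℝ {1, I}

/-- The orthogonal projection `π_I : ℍ → ℂ_I`, viewed as a map `ℍ → ℍ`. -/
def piI (I : Quaternion ℝ) (a : Quaternion ℝ) : Quaternion ℝ :=
  ((CI I).orthogonalProjection a : Quaternion ℝ)

/-- `f_I = ∑ₖ π_I(aₖ) Xᵏ`, the projection of the coefficients of `f` onto `ℂ_I`. -/
def polyProj (I : Quaternion ℝ) (f : Polynomial (Quaternion ℝ)) :
    Polynomial (Quaternion ℝ) :=
  f.sum fun k a => C (piI I a) * X ^ k

open scoped Classical in
/-- `K_{ℂ_I}(f_I)`: the convex hull of the roots of `f_I` in `ℂ_I` if `f_I` is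
nonconstant, and all of `ℂ_I` otherwise. -/
def KSet (I : Quaternion ℝ) (f : Polynomial (Quaternion ℝ)) : Set (Quaternion ℝ) :=
  if 0 < (polyProj I f).natDegree then
    convexHull ℝ {r : Quaternion ℝ | r ∈ CI I ∧ Polynomial.eval r (polyProj I f) = 0}
  else (CI I : Set (Quaternion ℝ))

/-- The Gauss–Lucas snail `sn(f) = ⋃_I K_{ℂ_I}(f_I)`, the union over all `I`
of trace `0` and norm `1`. -/
def snail (f : Polynomial (Quaternion ℝ)) : Set (Quaternion ℝ) :=
  ⋃ (I : Quaternion ℝ) (_ : I.re = 0 ∧ ‖I‖ = 1), KSet I f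

/-! ### Auxiliary lemmas -/

lemma norm_piI_le (I : Quaternion ℝ) (a : Quaternion ℝ) : ‖piI I a‖ ≤ ‖a‖ := by
  have h := ((CI I).orthogonalProjection).le_opNorm a
  have h2 := Submodule.orthogonalProjectionOnto_norm_le (CI I)
  calc ‖piI I a‖ = ‖(CI I).orthogonalProjection a‖ := rfl
    _ ≤ ‖(CI I).orthogonalProjection‖ * ‖a‖ := h
    _ ≤ 1 * ‖a‖ := by gcongr
    _ = ‖a‖ := one_mul _

lemma piI_zero (I : Quaternion ℝ) : piI I 0 = 0 := by
  simp [piI]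

lemma piI_one (I : Quaternion ℝ) : piI I 1 = 1 := by
  unfold piI
  exact Submodule.starProjection_eq_self_iff.mpr
    (Submodule.subset_span (Set.mem_insert _ _))

lemma coeff_polyProj (I : Quaternion ℝ) (f : Polynomial (Quaternion ℝ)) (m : ℕ) :
    (polyProj I f).coeff m = piI I (f.coeff m) := by
  unfold polyProj Polynomial.sum
  rw [Polynomial.finset_sum_coeff]
  simp only [Polynomial.coeff_C_mul_X_pow]
  by_cases hm : m ∈ f.support
  · rw [Finset.sum_eq_single m]
    · simp
    · intro b _ hb; simp [Ne.symm hb]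
    · intro h; exact absurd hm h
  · rw [Finset.sum_eq_zero]
    · rw [Polynomial.notMem_support_iff.mp hm, piI_zero]
    · intro b hb
      by_cases h : m = b
      · subst h; exact absurd hb hm
      · simp [h]

lemma natDegree_polyProj (I : Quaternion ℝ) (f : Polynomial (Quaternion ℝ))
    (hmonic : f.Monic) : (polyProj I f).natDegree = f.natDegree := by
  apply le_antisymm
  · apply Polynomial.natDegree_le_iff_coeff_eq_zero.mpr
    intro m hm
    rw [coeff_polyProj, Polynomial.coeff_eq_zero_of_natDegree_lt hm, piI_zero]
  · apply Polynomial.le_natDegree_of_ne_zero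
    rw [coeff_polyProj, hmonic.coeff_natDegree, piI_one]
    exact one_ne_zero

/-- The key real-analytic bounds. -/
lemma key_bounds (n : ℕ) (hne : (Finset.range n).Nonempty) (c : ℕ → ℝ)
    (hc : ∀ k, 0 ≤ c k) (t : ℝ) (ht : 0 ≤ t)
    (h : t ^ n ≤ ∑ k ∈ Finset.range n, c k * t ^ k) :
    t < Real.sqrt (1 + ∑ k ∈ Finset.range n, c k ^ 2) ∧
    t < 1 + (Finset.range n).sup' hne c ∧
    t ≤ max 1 (∑ k ∈ Finset.range n, c k) := by
  have hn : 1 ≤ n := by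
    rcases Finset.nonempty_range_iff.mp hne with h'
    omega
  refine ⟨?_, ?_, ?_⟩
  · -- sqrt bound
    set S := ∑ k ∈ Finset.range n, c k ^ 2 with hS
    have hS0 : 0 ≤ S := Finset.sum_nonneg fun k _ => sq_nonneg _
    by_cases ht1 : t ≤ 1
    · by_cases hSz : S = 0
      · -- all c k are zero
        rw [hS] at hSz
        have hck : ∀ k ∈ Finset.range n, c k ^ 2 = 0 :=
          (Finset.sum_eq_zero_iff_of_nonneg (fun k _ => sq_nonneg (c k))).mp hSz
        have hsum0 : ∑ k ∈ Finset.range n, c k * t ^ k = 0 := by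
          apply Finset.sum_eq_zero
          intro k hk
          have : c k = 0 := by
            have := hck k hk; nlinarith [hc k]
          simp [this]
        have htn : t ^ n ≤ 0 := by rw [hsum0] at h; exact h
        have ht0 : t = 0 := by
          by_contra h0
          have : 0 < t := lt_of_le_of_ne ht (Ne.symm h0)
          exact absurd htn (not_le.mpr (pow_pos this n))
        rw [ht0, hS, hSz]
        simp [Real.sqrt_one]
      · have hSpos : 0 < S := lt_of_le_of_ne hS0 (Ne.symm hSz)
        have : (1 : ℝ) < Real.sqrt (1 + S) := by
          rw [Real.lt_sqrt zero_le_one]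
          nlinarith
        calc t ≤ 1 := ht1
          _ < Real.sqrt (1 + S) := this
    · push_neg at ht1
      have htpos : 0 < t := lt_trans one_pos ht1
      -- Cauchy-Schwarz
      have hCS : (∑ k ∈ Finset.range n, c k * t ^ k) ^ 2 ≤
          S * ∑ k ∈ Finset.range n, (t ^ 2) ^ k := by
        have h' := Finset.sum_mul_sq_le_sq_mul_sq (Finset.range n) c (fun k => t ^ k)
        have he : ∑ k ∈ Finset.range n, (t ^ k) ^ 2 =
            ∑ k ∈ Finset.range n, (t ^ 2) ^ k :=
          Finset.sum_congr rfl fun k _ => by rw [← pow_mul, ← pow_mul, mul_comm]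
        calc (∑ k ∈ Finset.range n, c k * t ^ k) ^ 2
            ≤ (∑ k ∈ Finset.range n, c k ^ 2) * ∑ k ∈ Finset.range n, (t ^ k) ^ 2 := h'
          _ = S * ∑ k ∈ Finset.range n, (t ^ 2) ^ k := by rw [he, hS]
      have hsum_pos : 0 < ∑ k ∈ Finset.range n, c k * t ^ k :=
        lt_of_lt_of_le (pow_pos htpos n) h
      have hSpos : 0 < S := by
        by_contra hS'
        push_neg at hS'
        have hSz : S = 0 := le_antisymm hS' hS0
        rw [hSz, zero_mul] at hCS
        nlinarith
      have ht2n : t ^ (2 * n) ≤ S * ∑ k ∈ Finset.range n, (t ^ 2) ^ k := by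
        calc t ^ (2 * n) = (t ^ n) ^ 2 := by rw [← pow_mul, mul_comm]
          _ ≤ (∑ k ∈ Finset.range n, c k * t ^ k) ^ 2 := by
              apply pow_le_pow_left₀ (le_of_lt (pow_pos htpos n)) h
          _ ≤ _ := hCS
      have hgeom : (∑ k ∈ Finset.range n, (t ^ 2) ^ k) * (t ^ 2 - 1) =
          (t ^ 2) ^ n - 1 := geom_sum_mul _ _
      have ht2gt : (1 : ℝ) < t ^ 2 := by nlinarith
      have hfin : t ^ (2*n) * (t ^ 2 - 1) ≤ S * ((t^2)^n - 1) := by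
        calc t ^ (2*n) * (t ^ 2 - 1)
            ≤ (S * ∑ k ∈ Finset.range n, (t ^ 2) ^ k) * (t ^ 2 - 1) := by
              apply mul_le_mul_of_nonneg_right ht2n (by linarith)
          _ = S * ((t^2)^n - 1) := by rw [mul_assoc, hgeom]
      have hpow : (t^2)^n = t^(2*n) := by rw [← pow_mul]
      have htn_pos : 0 < t ^ (2*n) := pow_pos htpos _
      have : t^2 - 1 < S := by nlinarith
      rw [Real.lt_sqrt ht]
      linarith
  · -- sup bound
    set M := (Finset.range n).sup' hne c with hM
    have hM0 : 0 ≤ M := le_trans (hc 0)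
      (Finset.le_sup' c (Finset.mem_range.mpr (by omega)))
    have hle : ∀ k ∈ Finset.range n, c k ≤ M := fun k hk => Finset.le_sup' c hk
    by_cases ht1 : t ≤ 1
    · by_cases hMz : M = 0
      · have hsum0 : ∑ k ∈ Finset.range n, c k * t ^ k = 0 := by
          apply Finset.sum_eq_zero
          intro k hk
          have : c k = 0 := le_antisymm (hMz ▸ hle k hk) (hc k)
          simp [this]
        have htn : t ^ n ≤ 0 := hsum0 ▸ h
        have ht0 : t = 0 := by
          by_contra h0
          exact absurd htn (not_le.mpr (pow_pos (lt_of_le_of_ne ht (Ne.symm h0)) n))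
        rw [ht0, hMz]; norm_num
      · have : 0 < M := lt_of_le_of_ne hM0 (Ne.symm hMz)
        linarith
    · push_neg at ht1
      have htpos : 0 < t := lt_trans one_pos ht1
      have hsum : ∑ k ∈ Finset.range n, c k * t ^ k ≤
          M * ∑ k ∈ Finset.range n, t ^ k := by
        rw [Finset.mul_sum]
        apply Finset.sum_le_sum
        intro k hk
        exact mul_le_mul_of_nonneg_right (hle k hk) (le_of_lt (pow_pos htpos k))
      have hgeom : (∑ k ∈ Finset.range n, t ^ k) * (t - 1) = t ^ n - 1 :=
        geom_sum_mul _ _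
      have hMpos : 0 < M := by
        by_contra hM'
        push_neg at hM'
        have hMz : M = 0 := le_antisymm hM' hM0
        have : ∑ k ∈ Finset.range n, c k * t ^ k ≤ 0 := by
          rw [hMz, zero_mul] at hsum; exact hsum
        exact absurd (le_trans h this) (not_le.mpr (pow_pos htpos n))
      have htn_pos : 0 < t ^ n := pow_pos htpos n
      have hfin : t ^ n * (t - 1) ≤ M * (t ^ n - 1) := by
        calc t ^ n * (t - 1) ≤ (M * ∑ k ∈ Finset.range n, t ^ k) * (t - 1) := by
              apply mul_le_mul_of_nonneg_right (le_trans h hsum) (by linarith)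
          _ = M * (t ^ n - 1) := by rw [mul_assoc, hgeom]
      nlinarith
  · -- max bound
    by_cases ht1 : t ≤ 1
    · exact le_max_of_le_left ht1
    · push_neg at ht1
      have htpos : 0 < t := lt_trans one_pos ht1
      have hsum : ∑ k ∈ Finset.range n, c k * t ^ k ≤
          (∑ k ∈ Finset.range n, c k) * t ^ (n - 1) := by
        rw [Finset.sum_mul]
        apply Finset.sum_le_sum
        intro k hk
        apply mul_le_mul_of_nonneg_left _ (hc k)
        apply pow_le_pow_right₀ (le_of_lt ht1)
        have := Finset.mem_range.mp hk
        omega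
      have hpow : t ^ n = t * t ^ (n - 1) := by
        rw [← pow_succ']
        congr 1
        omega
      have htn1_pos : 0 < t ^ (n - 1) := pow_pos htpos _
      have : t * t ^ (n - 1) ≤ (∑ k ∈ Finset.range n, c k) * t ^ (n - 1) := by
        rw [← hpow]; exact le_trans h hsum
      have ht_le : t ≤ ∑ k ∈ Finset.range n, c k :=
        le_of_mul_le_mul_right (by linarith [this]) htn1_pos
      exact le_max_of_le_right ht_le

/- Lemma 4.10 (specialized to ℍ): Cauchy-type bounds on the snail of a monic
polynomial `f = Xⁿ + a_{n−1}X^{n−1} + ⋯ + a₀` with `n ≥ 1`. -/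
theorem snail_bounds
    (f : Polynomial (Quaternion ℝ)) (hmonic : f.Monic) (hn : 1 ≤ f.natDegree)
    (r : Quaternion ℝ) (hr : r ∈ snail f) :
    ‖r‖ < Real.sqrt (1 + ∑ k ∈ Finset.range f.natDegree, ‖f.coeff k‖ ^ 2) ∧
    ‖r‖ < 1 + (Finset.range f.natDegree).sup'
        (Finset.nonempty_range_iff.mpr (by omega)) (fun k => ‖f.coeff k‖) ∧
    ‖r‖ ≤ max 1 (∑ k ∈ Finset.range f.natDegree, ‖f.coeff k‖) := by
  classical
  set n := f.natDegree with hn_def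
  obtain ⟨I, hI, hK⟩ : ∃ I : Quaternion ℝ, (I.re = 0 ∧ ‖I‖ = 1) ∧ r ∈ KSet I f := by
    simpa [snail] using hr
  have hdeg : (polyProj I f).natDegree = n := natDegree_polyProj I f hmonic
  rw [KSet, if_pos (by omega : 0 < (polyProj I f).natDegree)] at hK
  set hne : (Finset.range n).Nonempty := Finset.nonempty_range_iff.mpr (by omega)
  set R1 := Real.sqrt (1 + ∑ k ∈ Finset.range n, ‖f.coeff k‖ ^ 2) with hR1
  set R2 := 1 + (Finset.range n).sup' hne (fun k => ‖f.coeff k‖) with hR2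
  set R3 := max 1 (∑ k ∈ Finset.range n, ‖f.coeff k‖) with hR3
  set B : Set (Quaternion ℝ) :=
    Metric.ball 0 R1 ∩ Metric.ball 0 R2 ∩ Metric.closedBall 0 R3 with hB
  have hBconvex : Convex ℝ B :=
    ((convex_ball 0 R1).inter (convex_ball 0 R2)).inter (convex_closedBall 0 R3)
  have hroots : {z : Quaternion ℝ | z ∈ CI I ∧ Polynomial.eval z (polyProj I f) = 0}
      ⊆ B := by
    rintro z ⟨-, hz⟩
    -- obtain the key inequality
    have heval : ∑ k ∈ Finset.range (n + 1), (polyProj I f).coeff k * z ^ k = 0 := by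
      rw [← Polynomial.eval_eq_sum_range' (by omega : (polyProj I f).natDegree < n + 1)]
      exact hz
    rw [Finset.sum_range_succ] at heval
    have hcoeffn : (polyProj I f).coeff n = 1 := by
      rw [coeff_polyProj, hn_def, hmonic.coeff_natDegree, piI_one]
    rw [hcoeffn, one_mul] at heval
    have hzn : z ^ n = -∑ k ∈ Finset.range n, (polyProj I f).coeff k * z ^ k := by
      rw [add_comm] at heval
      exact add_eq_zero_iff_eq_neg.mp heval
    have hkey : ‖z‖ ^ n ≤ ∑ k ∈ Finset.range n, ‖f.coeff k‖ * ‖z‖ ^ k := by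
      calc ‖z‖ ^ n = ‖z ^ n‖ := (norm_pow z n).symm
        _ = ‖∑ k ∈ Finset.range n, (polyProj I f).coeff k * z ^ k‖ := by
            rw [hzn, norm_neg]
        _ ≤ ∑ k ∈ Finset.range n, ‖(polyProj I f).coeff k * z ^ k‖ :=
            norm_sum_le _ _
        _ ≤ ∑ k ∈ Finset.range n, ‖f.coeff k‖ * ‖z‖ ^ k := by
            apply Finset.sum_le_sum
            intro k _
            rw [norm_mul, norm_pow]
            apply mul_le_mul_of_nonneg_right _ (pow_nonneg (norm_nonneg z) k)
            rw [coeff_polyProj]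
            exact norm_piI_le I _
    obtain ⟨h1, h2, h3⟩ := key_bounds n hne (fun k => ‖f.coeff k‖)
      (fun k => norm_nonneg _) ‖z‖ (norm_nonneg z) hkey
    refine ⟨⟨?_, ?_⟩, ?_⟩
    · rw [Metric.mem_ball, dist_zero_right]; exact h1
    · rw [Metric.mem_ball, dist_zero_right]; exact h2
    · rw [Metric.mem_closedBall, dist_zero_right]; exact h3
  have hrB : r ∈ B := convexHull_min hroots hBconvex hK
  obtain ⟨⟨hr1, hr2⟩, hr3⟩ := hrB
  rw [Metric.mem_ball, dist_zero_right] at hr1 hr2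
  rw [Metric.mem_closedBall, dist_zero_right] at hr3
  exact ⟨hr1, hr2, hr3⟩
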